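/- Let A ∈ ℝ^{m×n}, let b ∈ ℝ^m with b ≠ 0, let p ∈ (0,1), λ > 0, and let k be an integer with 2 ≤ k ≤ n. If λ ≥ γ(k) := k^{p−1} (2‖A‖/p)^p ‖b‖₂^{2−p}, where ‖A‖ denotes the spectral (operator 2-) norm of A, then every local minimizer x* of f_p over ℝ^n satisfying f_p(x*) ≤ f_p(0) = ‖b‖₂² has ‖x*‖₀ < k. -/

import Mathlib

/-- Derivative of `t ↦ |t| ^ p` at a nonzero point. -/
lemma aux_abs_rpow {p c : ℝ} (hp : 0 < p) (hc : c ≠ 0) :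
    ∃ d : ℝ, HasDerivAt (fun t : ℝ => |t| ^ p) d c ∧ |d| = p * |c| ^ (p - 1) := by
  rcases hc.lt_or_gt with h | h
  · refine ⟨-(p * (-c) ^ (p - 1)), ?_, ?_⟩
    · have h1 : HasDerivAt (fun t : ℝ => (-t) ^ p) (p * (-c) ^ (p - 1) * -1) c := by
        have houter := Real.hasDerivAt_rpow_const (x := -c) (p := p)
          (Or.inl (by simpa using h.ne))
        exact HasDerivAt.comp c houter (hasDerivAt_neg c)
      have h2 : (fun t : ℝ => |t| ^ p) =ᶠ[nhds c] (fun t : ℝ => (-t) ^ p) := by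
        filter_upwards [Iio_mem_nhds h] with t ht
        rw [abs_of_neg ht]
      simpa [mul_neg] using h1.congr_of_eventuallyEq h2
    · have hc' : (0:ℝ) < -c := by linarith
      rw [abs_neg, abs_of_neg h, abs_of_nonneg (by positivity)]
  · refine ⟨p * c ^ (p - 1), ?_, ?_⟩
    · have h1 := Real.hasDerivAt_rpow_const (x := c) (p := p) (Or.inl hc)
      have h2 : (fun t : ℝ => |t| ^ p) =ᶠ[nhds c] (fun t : ℝ => t ^ p) := by
        filter_upwards [Ioi_mem_nhds h] with t ht
        rw [abs_of_pos ht]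
      exact h1.congr_of_eventuallyEq h2
    · rw [abs_of_pos h, abs_of_nonneg]
      positivity

/-- The objective `f_p(x) = ‖Ax − b‖₂² + λ Σ_i |x_i|^p`. -/
noncomputable def fp (m n : ℕ) (A : Matrix (Fin m) (Fin n) ℝ) (b : Fin m → ℝ)
    (lam p : ℝ) (x : Fin n → ℝ) : ℝ :=
  (∑ i, (A.mulVec x i - b i) ^ 2) + lam * ∑ i, |x i| ^ p

/-- First-order condition at a local minimizer, in absolute-value form. -/
lemma foc (m n : ℕ) (A : Matrix (Fin m) (Fin n) ℝ) (b : Fin m → ℝ) (lam p : ℝ)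
    (hp0 : 0 < p) (hlam : 0 < lam) (x : Fin n → ℝ)
    (hloc : IsLocalMin (fp m n A b lam p) x) (i : Fin n) (hi : x i ≠ 0) :
    lam * (p * |x i| ^ (p - 1)) = 2 * |∑ j, A j i * (A.mulVec x j - b j)| := by
  classical
  obtain ⟨d, hd, habs⟩ := aux_abs_rpow hp0 hi
  -- local min of the one-variable slice
  have hcont : ContinuousAt (fun t : ℝ => Function.update x i t) (x i) := by
    apply Continuous.continuousAt
    apply continuous_pi
    intro l
    by_cases hl : l = i
    · subst hl; simpa [Function.update_self] using continuous_id'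
    · simpa [Function.update_of_ne hl] using continuous_const
  have hmin : IsLocalMin (fun t : ℝ => fp m n A b lam p (Function.update x i t)) (x i) := by
    have h' : IsLocalMin (fp m n A b lam p) (Function.update x i (x i)) := by
      rwa [Function.update_eq_self]
    exact h'.comp_continuous hcont
  -- derivative of the quadratic part
  have hq : ∀ j, HasDerivAt (fun t : ℝ => (A.mulVec (Function.update x i t) j - b j) ^ 2)
      (2 * (A.mulVec x j - b j) * A j i) (x i) := by
    intro j
    have h1 : HasDerivAt (fun t : ℝ => A.mulVec (Function.update x i t) j - b j)
        (A j i) (x i) := by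
      have hsum : HasDerivAt (fun t : ℝ => ∑ l, A j l * Function.update x i t l)
          (∑ l, if l = i then A j i else 0) (x i) := by
        apply HasDerivAt.fun_sum
        intro l _
        by_cases hl : l = i
        · subst hl
          simp only [Function.update_self, eq_self_iff_true, if_true]
          simpa using (hasDerivAt_id (x l)).const_mul (A j l)
        · simp only [Function.update_of_ne hl, if_neg hl]
          exact hasDerivAt_const _ _
      have hsum' : HasDerivAt (fun t : ℝ => (∑ l, A j l * Function.update x i t l) - b j)
          (A j i) (x i) := by
        simpa [Finset.sum_ite_eq' Finset.univ i] using hsum.sub_const (b j)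
      simpa [Matrix.mulVec, dotProduct] using hsum'
    have := h1.fun_pow 2
    simpa [Function.update_eq_self] using this
  -- derivative of the penalty part
  have hh : HasDerivAt (fun t : ℝ => ∑ l, |Function.update x i t l| ^ p) d (x i) := by
    have hsum : HasDerivAt (fun t : ℝ => ∑ l, |Function.update x i t l| ^ p)
        (∑ l, if l = i then d else 0) (x i) := by
      apply HasDerivAt.fun_sum
      intro l _
      by_cases hl : l = i
      · subst hl
        simp only [Function.update_self, eq_self_iff_true, if_true]
        exact hd
      · simp only [Function.update_of_ne hl, if_neg hl]
        exact hasDerivAt_const _ _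
    simpa [Finset.sum_ite_eq' Finset.univ i] using hsum
  have hF : HasDerivAt (fun t : ℝ => fp m n A b lam p (Function.update x i t))
      ((∑ j, 2 * (A.mulVec x j - b j) * A j i) + lam * d) (x i) := by
    unfold fp
    exact (HasDerivAt.fun_sum fun j _ => hq j).add (hh.const_mul lam)
  have h0 : (∑ j, 2 * (A.mulVec x j - b j) * A j i) + lam * d = 0 := by
    have := hmin.deriv_eq_zero
    rwa [hF.deriv] at this
  have hsum2 : (∑ j, 2 * (A.mulVec x j - b j) * A j i)
      = 2 * ∑ j, A j i * (A.mulVec x j - b j) := by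
    rw [Finset.mul_sum]
    exact Finset.sum_congr rfl fun j _ => by ring
  have hld : lam * d = -(2 * ∑ j, A j i * (A.mulVec x j - b j)) := by
    rw [hsum2] at h0; linarith
  calc lam * (p * |x i| ^ (p - 1)) = |lam * d| := by
        rw [abs_mul, habs, abs_of_pos hlam]
    _ = 2 * |∑ j, A j i * (A.mulVec x j - b j)| := by
        rw [hld, abs_neg, abs_mul]
        norm_num

/-- The key algebraic inequality. -/
lemma key_alg (p lam a β kk : ℝ) (hp0 : 0 < p) (hp1 : p < 1) (hlam : 0 < lam)
    (ha : 0 < a) (hβ : 0 < β) (hk : 0 < kk)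
    (hlb : kk ^ (p - 1) * (2 * a / p) ^ p * β ^ (2 - p) ≤ lam) :
    β ^ (2:ℝ) ≤ kk * lam * ((lam * p / (2 * a * β)) ^ ((1 - p)⁻¹)) ^ p := by
  have h1p : 0 < 1 - p := by linarith
  have ht : (0:ℝ) < lam * p / (2 * a * β) := by positivity
  rw [← Real.log_le_log_iff (by positivity) (by positivity)]
  set B := Real.log β with hB
  set K := Real.log kk with hK
  set X := Real.log lam with hX
  set P := Real.log p with hP
  set A2 := Real.log (2 * a) with hA2
  have e1 : Real.log (β ^ (2:ℝ)) = 2 * B := Real.log_rpow hβ 2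
  have e2 : Real.log (kk * lam * ((lam * p / (2 * a * β)) ^ ((1 - p)⁻¹)) ^ p)
      = K + X + p * ((1 - p)⁻¹ * (X + P - (A2 + B))) := by
    rw [Real.log_mul (by positivity) (by positivity),
        Real.log_mul hk.ne' hlam.ne',
        Real.log_rpow (Real.rpow_pos_of_pos ht _),
        Real.log_rpow ht,
        Real.log_div (by positivity) (by positivity),
        Real.log_mul hlam.ne' hp0.ne',
        Real.log_mul (by positivity) hβ.ne']
  have hlog : (p - 1) * K + p * (A2 - P) + (2 - p) * B ≤ X := by
    have h1 := Real.log_le_log (by positivity) hlb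
    rw [Real.log_mul (by positivity) (by positivity),
        Real.log_mul (by positivity) (by positivity),
        Real.log_rpow hk, Real.log_rpow (by positivity), Real.log_rpow hβ,
        Real.log_div (by positivity) hp0.ne'] at h1
    linarith
  rw [e1, e2]
  have hc : (1 - p) * (1 - p)⁻¹ = 1 := mul_inv_cancel₀ h1p.ne'
  have hgoal : 2 * B * (1 - p) ≤ (K + X + p * ((1 - p)⁻¹ * (X + P - (A2 + B)))) * (1 - p) := by
    have expand : (K + X + p * ((1 - p)⁻¹ * (X + P - (A2 + B)))) * (1 - p)
        = (K + X) * (1 - p) + p * (X + P - (A2 + B)) * ((1 - p) * (1 - p)⁻¹) := by ring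
    rw [expand, hc, mul_one]
    nlinarith [hlog]
  exact le_of_mul_le_mul_right (by linarith) h1p

set_option maxHeartbeats 1000000 in
/-- If `λ ≥ γ(k) = k^(p−1) (2‖A‖/p)^p ‖b‖^(2−p)`, where `‖A‖` is the spectral
(operator 2-) norm of `A` (characterized as the least `c ≥ 0` with
`‖Ax‖₂ ≤ c ‖x‖₂` for all `x`), then every local minimizer `x*` of `f_p` with
`f_p(x*) ≤ f_p(0) = ‖b‖₂²` has fewer than `k` nonzero entries. -/
theorem stmt_3 (m n : ℕ) (A : Matrix (Fin m) (Fin n) ℝ) (b : Fin m → ℝ)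
    (hb : b ≠ 0) (p lam : ℝ) (hp0 : 0 < p) (hp1 : p < 1) (hlam : 0 < lam)
    (k : ℕ) (hk2 : 2 ≤ k) (hkn : k ≤ n)
    (nA : ℝ)
    (hnA : IsLeast {c : ℝ | 0 ≤ c ∧ ∀ y : Fin n → ℝ,
      Real.sqrt (∑ i, (A.mulVec y i) ^ 2) ≤ c * Real.sqrt (∑ j, y j ^ 2)} nA)
    (hlb : lam ≥ (k : ℝ) ^ (p - 1) * (2 * nA / p) ^ p *
      Real.sqrt (∑ i, b i ^ 2) ^ (2 - p))
    (x : Fin n → ℝ)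
    (hloc : IsLocalMin (fp m n A b lam p) x)
    (hlev : fp m n A b lam p x ≤ fp m n A b lam p 0) :
    (Finset.univ.filter fun i => x i ≠ 0).card < k := by
  classical
  by_contra hcon
  push_neg at hcon
  set S := Finset.univ.filter fun i : Fin n => x i ≠ 0 with hS
  set β := Real.sqrt (∑ i, b i ^ 2) with hβdef
  obtain ⟨j₀, hj₀⟩ : ∃ j, b j ≠ 0 := Function.ne_iff.mp hb
  have hsumb : 0 < ∑ i, b i ^ 2 := by
    apply Finset.sum_pos'
    · intro i _; exact sq_nonneg _
    · exact ⟨j₀, Finset.mem_univ _, lt_of_le_of_ne (sq_nonneg _) (Ne.symm (pow_ne_zero 2 hj₀))⟩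
  have hβpos : 0 < β := Real.sqrt_pos.mpr hsumb
  have hf0 : fp m n A b lam p 0 = ∑ i, b i ^ 2 := by
    simp [fp, Matrix.mulVec_zero, Real.zero_rpow hp0.ne', zero_sub, neg_sq]
  have hpen_nonneg : (0:ℝ) ≤ ∑ i, |x i| ^ p :=
    Finset.sum_nonneg fun i _ => Real.rpow_nonneg (abs_nonneg _) _
  have hlev' : (∑ j, (A.mulVec x j - b j) ^ 2) + lam * ∑ i, |x i| ^ p ≤ ∑ i, b i ^ 2 := by
    rw [← hf0]; exact hlev
  have hrle : Real.sqrt (∑ j, (A.mulVec x j - b j) ^ 2) ≤ β := by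
    apply Real.sqrt_le_sqrt
    nlinarith [mul_nonneg hlam.le hpen_nonneg]
  -- first-order bound
  have hfoc : ∀ i, x i ≠ 0 → lam * (p * |x i| ^ (p - 1))
      ≤ 2 * nA * Real.sqrt (∑ j, (A.mulVec x j - b j) ^ 2) := by
    intro i hi
    rw [foc m n A b lam p hp0 hlam x hloc i hi]
    have hcol : Real.sqrt (∑ j, (A j i) ^ 2) ≤ nA := by
      have h1 := hnA.1.2 (Pi.single i (1:ℝ))
      have h2 : ∀ j, A.mulVec (Pi.single i (1:ℝ)) j = A j i := by
        intro j
        rw [Matrix.mulVec_single]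
        exact mul_one _
      have h3 : (∑ j : Fin n, (Pi.single i (1:ℝ) : Fin n → ℝ) j ^ 2) = 1 := by
        simp [Pi.single_apply]
      rw [h3, Real.sqrt_one, mul_one] at h1
      simpa only [h2] using h1
    have hcs : |∑ j, A j i * (A.mulVec x j - b j)|
        ≤ Real.sqrt (∑ j, (A j i) ^ 2) * Real.sqrt (∑ j, (A.mulVec x j - b j) ^ 2) := by
      have h4 := Finset.sum_mul_sq_le_sq_mul_sq Finset.univ (fun j => A j i)
        (fun j => A.mulVec x j - b j)
      have h5 : |∑ j, A j i * (A.mulVec x j - b j)|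
          = Real.sqrt ((∑ j, A j i * (A.mulVec x j - b j)) ^ 2) :=
        (Real.sqrt_sq_eq_abs _).symm
      rw [h5, ← Real.sqrt_mul (Finset.sum_nonneg fun j _ => sq_nonneg _)]
      exact Real.sqrt_le_sqrt h4
    calc 2 * |∑ j, A j i * (A.mulVec x j - b j)|
        ≤ 2 * (Real.sqrt (∑ j, (A j i) ^ 2) * Real.sqrt (∑ j, (A.mulVec x j - b j) ^ 2)) := by
          linarith
      _ ≤ 2 * nA * Real.sqrt (∑ j, (A.mulVec x j - b j) ^ 2) := by
          have := mul_le_mul_of_nonneg_right hcol (Real.sqrt_nonneg (∑ j, (A.mulVec x j - b j) ^ 2))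
          linarith
  -- S is nonempty
  have hScard : k ≤ S.card := hcon
  obtain ⟨i₀, hi₀⟩ := Finset.card_pos.mp (lt_of_lt_of_le (by omega) hScard)
  have hi₀' : x i₀ ≠ 0 := (Finset.mem_filter.mp hi₀).2
  have habs₀ : 0 < |x i₀| := abs_pos.mpr hi₀'
  have hpos0 : 0 < lam * (p * |x i₀| ^ (p - 1)) :=
    mul_pos hlam (mul_pos hp0 (Real.rpow_pos_of_pos habs₀ _))
  have h2' : 0 < 2 * nA * Real.sqrt (∑ j, (A.mulVec x j - b j) ^ 2) :=
    lt_of_lt_of_le hpos0 (hfoc i₀ hi₀')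
  have hρnn := Real.sqrt_nonneg (∑ j, (A.mulVec x j - b j) ^ 2)
  have hnApos : 0 < nA := by
    by_contra h
    push_neg at h
    nlinarith
  have hρpos : 0 < Real.sqrt (∑ j, (A.mulVec x j - b j) ^ 2) := by
    by_contra h
    push_neg at h
    nlinarith [hnA.1.1]
  -- lower bound on nonzero entries
  set L := (lam * p / (2 * nA * β)) ^ ((1 - p)⁻¹) with hLdef
  have h1p : 0 < 1 - p := by linarith
  have htpos : (0:ℝ) < lam * p / (2 * nA * β) := by positivity
  have hLpos : 0 < L := Real.rpow_pos_of_pos htpos _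
  have hLp : L ^ (p - 1) = 2 * nA * β / (lam * p) := by
    rw [hLdef, ← Real.rpow_mul htpos.le,
      show (1 - p)⁻¹ * (p - 1) = -1 by
        field_simp; ring,
      Real.rpow_neg_one, inv_div]
  have hxL : ∀ i ∈ S, L ^ p ≤ |x i| ^ p := by
    intro i hiS
    have hi : x i ≠ 0 := (Finset.mem_filter.mp hiS).2
    have habs : 0 < |x i| := abs_pos.mpr hi
    have hb1 : lam * (p * |x i| ^ (p - 1)) ≤ 2 * nA * β := by
      calc lam * (p * |x i| ^ (p - 1)) ≤ 2 * nA * Real.sqrt (∑ j, (A.mulVec x j - b j) ^ 2) :=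
            hfoc i hi
        _ ≤ 2 * nA * β := by nlinarith
    have hb2 : |x i| ^ (p - 1) ≤ L ^ (p - 1) := by
      rw [hLp, le_div_iff₀ (by positivity)]
      nlinarith
    have hio : L ≤ |x i| :=
      (Real.rpow_le_rpow_iff_of_neg habs hLpos (by linarith)).mp hb2
    exact Real.rpow_le_rpow hLpos.le hio hp0.le
  have hsum : (S.card : ℝ) * L ^ p ≤ ∑ i, |x i| ^ p := by
    calc (S.card : ℝ) * L ^ p = ∑ _i ∈ S, L ^ p := by
          rw [Finset.sum_const, nsmul_eq_mul]
      _ ≤ ∑ i ∈ S, |x i| ^ p := Finset.sum_le_sum hxL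
      _ ≤ ∑ i, |x i| ^ p := Finset.sum_le_sum_of_subset_of_nonneg (Finset.filter_subset _ _)
          (fun i _ _ => Real.rpow_nonneg (abs_nonneg _) _)
  have hsumr : 0 < ∑ j, (A.mulVec x j - b j) ^ 2 := Real.sqrt_pos.mp hρpos
  have hKstrict : lam * ((S.card : ℝ) * L ^ p) < ∑ i, b i ^ 2 := by
    nlinarith [mul_le_mul_of_nonneg_left hsum hlam.le]
  have hub : (∑ i, b i ^ 2 : ℝ) ≤ (k : ℝ) * lam * L ^ p := by
    have hkpos : (0:ℝ) < (k:ℝ) := by exact_mod_cast (by omega : 0 < k)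
    have := key_alg p lam nA β (k:ℝ) hp0 hp1 hlam hnApos hβpos hkpos hlb
    have hβ2 : β ^ (2:ℝ) = ∑ i, b i ^ 2 := by
      rw [show ((2:ℝ)) = ((2:ℕ):ℝ) by norm_num, Real.rpow_natCast]
      exact Real.sq_sqrt hsumb.le
    rw [hβ2] at this
    exact this
  have hZ : 0 < lam * L ^ p := mul_pos hlam (Real.rpow_pos_of_pos hLpos _)
  have hfin : (S.card : ℝ) * (lam * L ^ p) < (k : ℝ) * (lam * L ^ p) := by nlinarith
  have : (S.card : ℝ) < (k : ℝ) := lt_of_mul_lt_mul_right (by linarith) hZ.le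
  have : S.card < k := by exact_mod_cast this
  omega
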